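/- min(𝔤′, 𝔰) ≤ 𝔤 ≤ 𝔤′, where 𝔤′ is the smallest cardinality of a collection of non-meager downward-closed ideals of subsets of ω with empty intersection. In particular, if κ < min(𝔤′, 𝔰), then any κ groupwise dense subsets of [ω]^ω have a common member. -/

import Mathlib

open Set Cardinal MeasureTheory

/-- The characteristic function of a set of naturals, as a point of Cantor space `2^ω`. -/
noncomputable def chi (x : Set ℕ) : ℕ → Bool := fun n => @decide (n ∈ x) (Classical.dec _)

/-- `[ω]^ω`: the collection of infinite subsets of ω. -/
def InfSets : Set (Set ℕ) := {x : Set ℕ | x.Infinite}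

/-- `X ⊆ [ω]^ω` is downward closed for almost-inclusion `x ≤ y ↔ (x \ y).Finite`. -/
def DownClosed (X : Set (Set ℕ)) : Prop :=
  ∀ y ∈ X, ∀ x : Set ℕ, x.Infinite → (x \ y).Finite → x ∈ X

/-- `X` is meager as a subset of Cantor space `2^ω` (product topology on `ℕ → Bool`). -/
def MeagerSet (X : Set (Set ℕ)) : Prop := IsMeagre (chi '' X)

/-- A partition of ω into consecutive finite intervals `I n = [e n, e (n+1))`. -/
structure IntervalPartition where
  e : ℕ → ℕ
  zero : e 0 = 0
  mono : StrictMono e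

/-- The `n`-th interval of an interval partition. -/
def IntervalPartition.I (P : IntervalPartition) (n : ℕ) : Set ℕ :=
  Set.Ico (P.e n) (P.e (n + 1))

/-- `X ⊆ [ω]^ω` is groupwise dense: downward closed, and for every partition of ω into
finite intervals, the union of some infinitely many of the intervals belongs to `X`. -/
def GroupwiseDense (X : Set (Set ℕ)) : Prop :=
  X ⊆ InfSets ∧ DownClosed X ∧
    ∀ P : IntervalPartition, ∃ A : Set ℕ, A.Infinite ∧ (⋃ n ∈ A, P.I n) ∈ X

/-- `g` eventually majorizes `f`. -/
def EvMaj (f g : ℕ → ℕ) : Prop := ∀ᶠ k in Filter.atTop, f k ≤ g k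

/-- `M(Π)`: the infinite subsets of ω including only finitely many intervals of `Π`. -/
def MSet (P : IntervalPartition) : Set (Set ℕ) :=
  {x : Set ℕ | x.Infinite ∧ {n : ℕ | P.I n ⊆ x}.Finite}

/-- The index `n` of the interval `I n` of `P` containing `k`. -/
def idx (P : IntervalPartition) (k : ℕ) : ℕ := Nat.findGreatest (fun n => P.e n ≤ k) k

/-- `F_Π(k)`: the largest element of `I (n+2)`, where `k ∈ I n`. -/
def FPart (P : IntervalPartition) (k : ℕ) : ℕ := P.e (idx P k + 3) - 1

/-- The groupwise density number 𝔤. -/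
noncomputable def gNum : Cardinal :=
  sInf {c : Cardinal | ∃ S : Set (Set (Set ℕ)), (∀ G ∈ S, GroupwiseDense G) ∧
    #S = c ∧ InfSets ∩ ⋂₀ S = ∅}

/-- The bounding number 𝔟. -/
noncomputable def bNum : Cardinal :=
  sInf {c : Cardinal | ∃ F : Set (ℕ → ℕ), #F = c ∧ ∀ g : ℕ → ℕ, ∃ f ∈ F, ¬ EvMaj f g}

/-- The dominating number 𝔡. -/
noncomputable def dNum : Cardinal :=
  sInf {c : Cardinal | ∃ F : Set (ℕ → ℕ), #F = c ∧ ∀ g : ℕ → ℕ, ∃ f ∈ F, EvMaj g f}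

/-- `B_M`: the ideal of meager downward-closed subsets of `[ω]^ω`. -/
def BM : Set (Set (Set ℕ)) := {X : Set (Set ℕ) | X ⊆ InfSets ∧ DownClosed X ∧ MeagerSet X}

/-- `add(B_M)`. -/
noncomputable def addBM : Cardinal :=
  sInf {c : Cardinal | ∃ S : Set (Set (Set ℕ)), S ⊆ BM ∧ #S = c ∧ ⋃₀ S ∉ BM}

/-- `cov(B_M)`. -/
noncomputable def covBM : Cardinal :=
  sInf {c : Cardinal | ∃ S : Set (Set (Set ℕ)), S ⊆ BM ∧ #S = c ∧
    {x : Set ℕ | x.Infinite ∧ xᶜ.Infinite} ⊆ ⋃₀ S}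

/-- `unif(B_M)`. -/
noncomputable def unifBM : Cardinal :=
  sInf {c : Cardinal | ∃ S : Set (Set ℕ), (∀ x ∈ S, x.Infinite ∧ xᶜ.Infinite) ∧ #S = c ∧
    ∀ X ∈ BM, ¬ S ⊆ X}

/-- `cof(B_M)`. -/
noncomputable def cofBM : Cardinal :=
  sInf {c : Cardinal | ∃ C : Set (Set (Set ℕ)), C ⊆ BM ∧ #C = c ∧
    ∀ X ∈ BM, ∃ Y ∈ C, X ⊆ Y}

/-- `X ⊆ [ω]^ω` is dense: every infinite `A` has an infinite subset `B ∈ X`. -/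
def DenseM (X : Set (Set ℕ)) : Prop :=
  ∀ A : Set ℕ, A.Infinite → ∃ B ⊆ A, B.Infinite ∧ B ∈ X

/-- 𝔤′: the least number of non-meager downward-closed ideals on ω with empty intersection. -/
noncomputable def gNum' : Cardinal :=
  sInf {c : Cardinal | ∃ S : Set (Set (Set ℕ)),
    (∀ X ∈ S, X ⊆ InfSets ∧ DownClosed X ∧ (∀ x ∈ X, ∀ y ∈ X, x ∪ y ∈ X) ∧ ¬ MeagerSet X) ∧
    #S = c ∧ InfSets ∩ ⋂₀ S = ∅}

/-- The splitting number 𝔰. -/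
noncomputable def sNum : Cardinal :=
  sInf {c : Cardinal | ∃ S : Set (Set ℕ), #S = c ∧
    ∀ x : Set ℕ, x.Infinite → ∃ y ∈ S, (x ∩ y).Infinite ∧ (x \ y).Infinite}


section Aux

lemma open_bound {U : Set (ℕ → Bool)} (hU : IsOpen U) {f : ℕ → Bool} (hf : f ∈ U) :
    ∃ m, ∀ g : ℕ → Bool, (∀ k < m, g k = f k) → g ∈ U := by
  obtain ⟨I, u, hu, hsub⟩ := isOpen_pi_iff.1 hU f hf
  rcases I.bddAbove with ⟨m, hm⟩
  refine ⟨m + 1, fun g hg => hsub ?_⟩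
  intro i hi
  have : g i = f i := hg i (Nat.lt_succ_of_le (hm hi))
  rw [this]; exact (hu i hi).2

lemma isOpen_cyl (σ : ℕ → Bool) (a b : ℕ) :
    IsOpen {f : ℕ → Bool | ∀ k, a ≤ k → k < b → f k = σ k} := by
  have : {f : ℕ → Bool | ∀ k, a ≤ k → k < b → f k = σ k}
      = ⋂ k ∈ Finset.Ico a b, {f : ℕ → Bool | f k = σ k} := by
    ext f; simp only [Finset.mem_Ico, mem_iInter, mem_setOf_eq]; tauto
  rw [this]
  refine isOpen_biInter_finset fun k _ => ?_
  have : {f : ℕ → Bool | f k = σ k} = (fun f : ℕ → Bool => f k) ⁻¹' {σ k} := by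
    ext f; simp
  rw [this]
  exact (continuous_apply k).isOpen_preimage _ (isOpen_discrete _)

lemma dense_ext {D : Set (ℕ → Bool)} (hD : Dense D) (hDo : IsOpen D) (a c : ℕ) (hac : a ≤ c)
    (s σ : ℕ → Bool) :
    ∃ c' ≥ c, ∃ σ' : ℕ → Bool, (∀ k, a ≤ k → k < c → σ' k = σ k) ∧
      ∀ f : ℕ → Bool, (∀ k < a, f k = s k) → (∀ k, a ≤ k → k < c' → f k = σ' k) → f ∈ D := by
  set g : ℕ → Bool := fun k => if k < a then s k else σ k with hg
  have hVo : IsOpen {f : ℕ → Bool | ∀ k, 0 ≤ k → k < c → f k = g k} := isOpen_cyl g 0 c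
  have hVne : ({f : ℕ → Bool | ∀ k, 0 ≤ k → k < c → f k = g k}).Nonempty := ⟨g, fun _ _ _ => rfl⟩
  obtain ⟨h, hhD, hhV⟩ := hD.exists_mem_open hVo hVne
  obtain ⟨m, hm⟩ := open_bound hDo hhD
  refine ⟨max c m, le_max_left _ _, h, ?_, ?_⟩
  · intro k hak hkc
    have := hhV k (Nat.zero_le _) hkc
    simp only [hg, if_neg (not_lt.2 hak)] at this
    exact this
  · intro f hfs hfσ
    apply hm
    intro k hk
    rcases lt_or_ge k a with hka | hka
    · rw [hfs k hka]
      have := hhV k (Nat.zero_le _) (lt_of_lt_of_le hka hac)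
      simp only [hg, if_pos hka] at this
      exact this.symm
    · exact hfσ k hka (lt_of_lt_of_le hk (le_max_right c m))

lemma dense_ext_list {D : Set (ℕ → Bool)} (hD : Dense D) (hDo : IsOpen D) (a : ℕ)
    (L : List (ℕ → Bool)) :
    ∀ (c : ℕ), a ≤ c → ∀ (σ : ℕ → Bool), ∃ c' ≥ c, ∃ σ' : ℕ → Bool,
      (∀ k, a ≤ k → k < c → σ' k = σ k) ∧
      ∀ s ∈ L, ∀ f : ℕ → Bool, (∀ k < a, f k = s k) →
        (∀ k, a ≤ k → k < c' → f k = σ' k) → f ∈ D := by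
  induction L with
  | nil => exact fun c hc σ => ⟨c, le_refl c, σ, fun _ _ _ => rfl, fun s hs => by simp at hs⟩
  | cons s L ih =>
    intro c hc σ
    obtain ⟨c1, hc1, σ1, hσ1, h1⟩ := dense_ext hD hDo a c hc s σ
    obtain ⟨c', hc', σ', hσ', h'⟩ := ih c1 (le_trans hc hc1) σ1
    refine ⟨c', le_trans hc1 hc', σ', ?_, ?_⟩
    · intro k hak hkc
      rw [hσ' k hak (lt_of_lt_of_le hkc hc1), hσ1 k hak hkc]
    · intro t ht f hfs hfσ
      rcases List.mem_cons.1 ht with rfl | ht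
      · refine h1 f hfs fun k hak hkc1 => ?_
        rw [hfσ k hak (lt_of_lt_of_le hkc1 hc'), hσ' k hak hkc1]
      · exact h' t ht f hfs hfσ

lemma exists_cyl_all {D : Set (ℕ → Bool)} (hD : Dense D) (hDo : IsOpen D) (a c : ℕ) (hac : a ≤ c) :
    ∃ c' ≥ c, ∃ σ' : ℕ → Bool, ∀ f : ℕ → Bool, (∀ k, a ≤ k → k < c' → f k = σ' k) → f ∈ D := by
  set L : List (ℕ → Bool) :=
    (Finset.univ : Finset (Fin a → Bool)).toList.map
      (fun v k => if h : k < a then v ⟨k, h⟩ else false) with hL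
  obtain ⟨c', hc', σ', _, hspec⟩ := dense_ext_list hD hDo a L c hac (fun _ => false)
  refine ⟨c', hc', σ', fun f hf => ?_⟩
  set s : ℕ → Bool := fun k => if h : k < a then f k else false with hs
  have hsL : s ∈ L := by
    rw [hL]
    refine List.mem_map.2 ⟨fun i => f i, Finset.mem_toList.2 (Finset.mem_univ _), ?_⟩
    funext k; by_cases h : k < a <;> simp [hs, h]
  exact hspec s hsL f (fun k hk => by show f k = dite _ _ _; rw [dif_pos hk]) hf

lemma talagrand (F : ℕ → Set (ℕ → Bool)) (hF : ∀ i, IsNowhereDense (F i)) :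
    ∃ (e : ℕ → ℕ) (σ : ℕ → ℕ → Bool), e 0 = 0 ∧ StrictMono e ∧
      ∀ f : ℕ → Bool, ∀ i n, i ≤ n →
        (∀ k, e n ≤ k → k < e (n + 1) → f k = σ n k) → f ∉ F i := by
  set D : ℕ → Set (ℕ → Bool) := fun n => ⋂ i ∈ Finset.range (n + 1), (closure (F i))ᶜ with hDdef
  have hDo : ∀ n, IsOpen (D n) := fun n =>
    isOpen_biInter_finset fun i _ => (isClosed_closure).isOpen_compl
  have hDd : ∀ n, Dense (D n) := by
    intro n
    show Dense (⋂ i ∈ Finset.range (n + 1), (closure (F i))ᶜ)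
    induction n with
    | zero =>
      have h1 : ⋂ i ∈ Finset.range 1, (closure (F i))ᶜ = (closure (F 0))ᶜ := by simp
      rw [h1]
      exact interior_eq_empty_iff_dense_compl.1 (hF 0)
    | succ m ih =>
      have : ⋂ i ∈ Finset.range (m + 2), (closure (F i))ᶜ =
          (⋂ i ∈ Finset.range (m + 1), (closure (F i))ᶜ) ∩ (closure (F (m + 1)))ᶜ := by
        rw [Finset.range_add_one]
        rw [Finset.set_biInter_insert]
        exact Set.inter_comm _ _
      rw [this]
      exact ih.inter_of_isOpen_left (interior_eq_empty_iff_dense_compl.1 (hF (m+1)))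
        (isOpen_biInter_finset fun i _ => (isClosed_closure).isOpen_compl)
  have H : ∀ n a, ∃ c' ≥ a + 1, ∃ σ' : ℕ → Bool,
      ∀ f : ℕ → Bool, (∀ k, a ≤ k → k < c' → f k = σ' k) → f ∈ D n :=
    fun n a => exists_cyl_all (hDd n) (hDo n) a (a + 1) (Nat.le_succ a)
  choose c hc σg hσg using H
  set e : ℕ → ℕ := fun n => Nat.rec 0 (fun m em => c m em) n with he
  have he0 : e 0 = 0 := rfl
  have hes : ∀ n, e (n + 1) = c n (e n) := fun n => rfl
  have hmono : StrictMono e := by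
    apply strictMono_nat_of_lt_succ
    intro n
    rw [hes n]
    exact lt_of_lt_of_le (Nat.lt_succ_self _) (hc n (e n))
  refine ⟨e, fun n => σg n (e n), he0, hmono, ?_⟩
  intro f i n hin hagree
  have hfD : f ∈ D n := hσg n (e n) f (by rw [← hes n]; exact hagree)
  rw [hDdef] at hfD
  simp only [Set.mem_iInter] at hfD
  intro hfF
  exact hfD i (Finset.mem_range.2 (Nat.lt_succ_of_le hin)) (subset_closure hfF)

lemma chi_true {x : Set ℕ} {k : ℕ} : chi x k = true ↔ k ∈ x := by
  simp [chi, decide_eq_true_iff]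

lemma chi_false {x : Set ℕ} {k : ℕ} : chi x k = false ↔ k ∉ x := by
  rw [← Bool.not_eq_true, not_iff_not.2 (chi_true)]

lemma gwd_not_meager {X : Set (Set ℕ)} (h : GroupwiseDense X) : ¬ MeagerSet X := by
  intro hm
  obtain ⟨S, hSnwd, hScnt, hSsub⟩ := isMeagre_iff_countable_union_isNowhereDense.1 hm
  obtain ⟨F, hFr⟩ := (hScnt.insert (∅ : Set (ℕ → Bool))).exists_eq_range
    (insert_nonempty _ _)
  have hFnwd : ∀ i, IsNowhereDense (F i) := by
    intro i
    have : F i ∈ insert (∅ : Set (ℕ → Bool)) S := by rw [hFr]; exact mem_range_self i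
    rcases this with h0 | hFS
    · rw [h0]; exact isNowhereDense_empty
    · exact hSnwd _ hFS
  have hcover : chi '' X ⊆ ⋃ i, F i := by
    refine hSsub.trans ?_
    intro f ⟨t, ht, hft⟩
    have : t ∈ insert (∅ : Set (ℕ → Bool)) S := mem_insert_of_mem _ ht
    rw [hFr] at this
    obtain ⟨i, rfl⟩ := this
    exact mem_iUnion.2 ⟨i, hft⟩
  obtain ⟨e, σ, he0, hemono, hestop⟩ := talagrand F hFnwd
  set P : IntervalPartition := ⟨fun m => e (2 * m), by simpa using he0,
    fun m m' hmm => hemono (by omega)⟩ with hP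
  obtain ⟨A, hA, hyX⟩ := h.2.2 P
  set y : Set ℕ := ⋃ m ∈ A, P.I m with hy
  set B : Set ℕ := ⋃ m ∈ A, {k ∈ Set.Ico (e (2 * m)) (e (2 * m + 1)) | σ (2 * m) k = false}
    with hB
  set y' : Set ℕ := y \ B with hy'
  -- interval membership facts
  have hIm : ∀ m, P.I m = Set.Ico (e (2 * m)) (e (2 * m + 2)) := by
    intro m
    show Set.Ico (e (2 * m)) (e (2 * (m + 1))) = _
    have : 2 * (m + 1) = 2 * m + 2 := by omega
    rw [this]
  have hodd_mem : ∀ m ∈ A, e (2 * m + 1) ∈ y' := by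
    intro m hm
    constructor
    · refine mem_biUnion hm ?_
      rw [hIm m]
      exact ⟨le_of_lt (hemono (by omega)), hemono (by omega)⟩
    · intro hmemB
      obtain ⟨m', hm', ⟨hk1, hk2⟩, _⟩ := by
        simpa only [hB, mem_iUnion, mem_setOf_eq, exists_prop] using hmemB
      have h1 : 2 * m' ≤ 2 * m + 1 := (hemono.le_iff_le).1 hk1
      have h2 : 2 * m + 1 < 2 * m' + 1 := (hemono.lt_iff_lt).1 hk2
      omega
  have hy'inf : y'.Infinite := by
    apply Set.Infinite.mono (s := (fun m => e (2 * m + 1)) '' A)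
    · rintro _ ⟨m, hm, rfl⟩; exact hodd_mem m hm
    · exact hA.image (fun a _ b _ hab => by
        have := hemono.injective hab; omega)
  have hy'memX : y' ∈ X := h.2.1 y hyX y' hy'inf (by simp [hy'])
  have hagree : ∀ m ∈ A, ∀ k, e (2 * m) ≤ k → k < e (2 * m + 1) → chi y' k = σ (2 * m) k := by
    intro m hm k hk1 hk2
    have hky : k ∈ y := by
      refine mem_biUnion hm ?_
      rw [hIm m]
      exact ⟨hk1, lt_of_lt_of_le hk2 (le_of_lt (hemono (by omega)))⟩
    cases hσ : σ (2 * m) k with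
    | false =>
      rw [chi_false]
      intro hky'
      exact hky'.2 (mem_biUnion hm ⟨⟨hk1, hk2⟩, hσ⟩)
    | true =>
      rw [chi_true]
      refine ⟨hky, ?_⟩
      intro hkB
      obtain ⟨m', hm', ⟨hk1', hk2'⟩, hσ'⟩ := by
        simpa only [hB, mem_iUnion, mem_setOf_eq, exists_prop] using hkB
      have hmm' : m = m' := by
        by_contra hne
        rcases Nat.lt_or_ge m m' with hlt | hge
        · have : k < e (2 * m') := lt_of_lt_of_le hk2 (hemono.monotone (by omega))
          omega
        · have hgt : m' < m := by omega
          have : k < e (2 * m) := lt_of_lt_of_le hk2' (hemono.monotone (by omega))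
          omega
      rw [← hmm'] at hσ'
      rw [hσ] at hσ'
      exact Bool.true_eq_false.mp hσ'
  have hnotin : chi y' ∉ ⋃ i, F i := by
    rw [mem_iUnion]
    rintro ⟨i, hi⟩
    obtain ⟨m, hm, hmi⟩ := hA.exists_gt i
    refine hestop (chi y') i (2 * m) (by omega) ?_ hi
    intro k hk1 hk2
    exact hagree m hm k hk1 hk2
  exact hnotin (hcover (mem_image_of_mem _ hy'memX))

-- the "tail" sets: f is false somewhere in every interval beyond m
lemma nwd_tail (P : IntervalPartition) (m : ℕ) :
    IsNowhereDense {f : ℕ → Bool | ∀ n, m ≤ n → ∃ k, P.e n ≤ k ∧ k < P.e (n + 1) ∧ f k = false} := by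
  set C := {f : ℕ → Bool | ∀ n, m ≤ n → ∃ k, P.e n ≤ k ∧ k < P.e (n + 1) ∧ f k = false} with hC
  have hclosed : IsClosed C := by
    have : C = ⋂ n, ⋂ (_ : m ≤ n), ⋃ k ∈ Finset.Ico (P.e n) (P.e (n + 1)),
        {f : ℕ → Bool | f k = false} := by
      ext f
      simp only [hC, mem_setOf_eq, mem_iInter, mem_iUnion, Finset.mem_Ico, exists_prop,
        mem_setOf_eq]
      exact ⟨fun h n hn => (h n hn).imp (fun k ⟨a, b, c⟩ => ⟨⟨a, b⟩, c⟩),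
        fun h n hn => (h n hn).imp (fun k ⟨⟨a, b⟩, c⟩ => ⟨a, b, c⟩)⟩
    rw [this]
    refine isClosed_iInter fun n => isClosed_iInter fun _ => ?_
    refine Set.Finite.isClosed_biUnion (Finset.finite_toSet _) fun k _ => ?_
    have : {f : ℕ → Bool | f k = false} = (fun f : ℕ → Bool => f k) ⁻¹' {false} := by
      ext f; simp
    rw [this]
    exact IsClosed.preimage (continuous_apply k) (isClosed_discrete _)
  rw [IsNowhereDense, hclosed.closure_eq]
  rw [Set.eq_empty_iff_forall_notMem]
  intro f hf
  have hfC : f ∈ C := interior_subset hf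
  obtain ⟨I, u, hu, hsub⟩ := isOpen_pi_iff.1 isOpen_interior f hf
  rcases I.bddAbove with ⟨b, hb⟩
  set g : ℕ → Bool := fun k => if k ∈ I then f k else true with hg
  have hgC : g ∈ C := by
    apply interior_subset
    apply hsub
    intro i hi
    have hgi : (if i ∈ I then f i else true) = f i := if_pos hi
    show (if i ∈ I then f i else true) ∈ u i
    rw [hgi]
    exact (hu i hi).2
  set n := max m (b + 1) with hn
  obtain ⟨k, hk1, hk2, hk3⟩ := hgC n (le_max_left _ _)
  have hkI : k ∉ I := by
    intro hkI
    have h1 : k ≤ b := hb hkI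
    have h2 : P.e n ≤ k := hk1
    have h3 : n ≤ P.e n := P.mono.le_apply
    omega
  simp only [hg, if_neg hkI] at hk3
  simp at hk3

lemma nonmeager_gwd {X : Set (Set ℕ)} (h1 : X ⊆ InfSets) (h2 : DownClosed X)
    (h3 : ¬ MeagerSet X) : GroupwiseDense X := by
  refine ⟨h1, h2, ?_⟩
  intro P
  by_contra hno
  push_neg at hno
  apply h3
  -- X ⊆ sets including only finitely many intervals
  have hXM : ∀ x ∈ X, {n : ℕ | P.I n ⊆ x}.Finite := by
    intro x hx
    by_contra hinf
    replace hinf : {n : ℕ | P.I n ⊆ x}.Infinite := hinf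
    set A := {n : ℕ | P.I n ⊆ x} with hA
    have hyinf : (⋃ n ∈ A, P.I n).Infinite := by
      apply Set.Infinite.mono (s := P.e '' A)
      · rintro _ ⟨n, hn, rfl⟩
        exact mem_biUnion hn ⟨le_refl _, P.mono (Nat.lt_succ_self n)⟩
      · exact hinf.image (fun a _ b _ hab => P.mono.injective hab)
    have hyX : (⋃ n ∈ A, P.I n) ∈ X := by
      apply h2 x hx _ hyinf
      have : (⋃ n ∈ A, P.I n) \ x = ∅ := by
        rw [Set.diff_eq_empty]
        exact Set.iUnion₂_subset fun n hn => hn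
      rw [this]; exact finite_empty
    exact hno A hinf hyX
  -- hence chi '' X is contained in a countable union of nowhere dense tails
  rw [MeagerSet, isMeagre_iff_countable_union_isNowhereDense]
  refine ⟨Set.range (fun m => {f : ℕ → Bool | ∀ n, m ≤ n →
      ∃ k, P.e n ≤ k ∧ k < P.e (n + 1) ∧ f k = false}), ?_, countable_range _, ?_⟩
  · rintro _ ⟨m, rfl⟩; exact nwd_tail P m
  · rintro _ ⟨x, hx, rfl⟩
    obtain ⟨b, hb⟩ := (hXM x hx).bddAbove
    refine ⟨_, ⟨b + 1, rfl⟩, ?_⟩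
    intro n hn
    have hnotsub : ¬ P.I n ⊆ x := by
      intro hsub
      have := hb hsub
      omega
    obtain ⟨k, hk, hkx⟩ := Set.not_subset.1 hnotsub
    exact ⟨k, hk.1, hk.2, chi_false.2 hkx⟩

/-- The ideal generated by `G`. -/
def IdealGen (G : Set (Set ℕ)) : Set (Set ℕ) :=
  {x : Set ℕ | x.Infinite ∧ ∃ t : Finset (Set ℕ), ↑t ⊆ G ∧ (x \ ⋃₀ ↑t).Finite}

lemma idealGen_sub (G : Set (Set ℕ)) : IdealGen G ⊆ InfSets := fun _ h => h.1

lemma idealGen_down (G : Set (Set ℕ)) : DownClosed (IdealGen G) := by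
  rintro y ⟨hyinf, t, htG, hyt⟩ x hxinf hxy
  refine ⟨hxinf, t, htG, ?_⟩
  exact Set.Finite.subset (hxy.union hyt) (fun k hk => by
    by_cases h : k ∈ y
    · exact Or.inr ⟨h, hk.2⟩
    · exact Or.inl ⟨hk.1, h⟩)

lemma idealGen_union (G : Set (Set ℕ)) :
    ∀ x ∈ IdealGen G, ∀ y ∈ IdealGen G, x ∪ y ∈ IdealGen G := by
  classical
  rintro x ⟨hxinf, t1, ht1, hxt⟩ y ⟨hyinf, t2, ht2, hyt⟩
  refine ⟨hxinf.mono Set.subset_union_left, t1 ∪ t2, ?_, ?_⟩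
  · rw [Finset.coe_union]
    exact Set.union_subset ht1 ht2
  · apply Set.Finite.subset (hxt.union hyt)
    rintro k ⟨hk1 | hk1, hk2⟩
    · refine Or.inl ⟨hk1, fun h => hk2 ?_⟩
      rw [Finset.coe_union, Set.sUnion_union]
      exact Set.mem_union_left _ h
    · refine Or.inr ⟨hk1, fun h => hk2 ?_⟩
      rw [Finset.coe_union, Set.sUnion_union]
      exact Set.mem_union_right _ h

lemma sub_idealGen {G : Set (Set ℕ)} (hG : G ⊆ InfSets) : G ⊆ IdealGen G := by
  intro x hx
  exact ⟨hG hx, {x}, by simpa using hx, by simp⟩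

lemma idealGen_gwd {G : Set (Set ℕ)} (hG : GroupwiseDense G) : GroupwiseDense (IdealGen G) := by
  refine ⟨idealGen_sub G, idealGen_down G, fun P => ?_⟩
  obtain ⟨A, hA, hAG⟩ := hG.2.2 P
  exact ⟨A, hA, sub_idealGen hG.1 hAG⟩

/-- Diagonalization against a finite list: an infinite subset of `z` unsplit by every member. -/
lemma unsplit_list (L : List (Set ℕ)) :
    ∀ z : Set ℕ, z.Infinite →
      ∃ x ⊆ z, x.Infinite ∧ ∀ y ∈ L, (x ∩ y).Finite ∨ (x \ y).Finite := by
  induction L with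
  | nil => exact fun z hz => ⟨z, le_refl _, hz, fun y hy => by simp at hy⟩
  | cons y L ih =>
    intro z hz
    obtain ⟨x, hxz, hxinf, hx⟩ := ih z hz
    have hcases : (x ∩ y).Infinite ∨ (x \ y).Infinite := by
      by_contra hc
      push_neg at hc
      exact hxinf (Set.Finite.subset (hc.1.union hc.2)
        (fun k hk => by by_cases h : k ∈ y
                        · exact Or.inl ⟨hk, h⟩
                        · exact Or.inr ⟨hk, h⟩))
    have step : ∀ x' : Set ℕ, x' ⊆ x → x'.Infinite →
        (∀ y' ∈ L, (x' ∩ y').Finite ∨ (x' \ y').Finite) := by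
      intro x' hx'x _ y' hy'
      rcases hx y' hy' with h1 | h1
      · exact Or.inl (h1.subset (fun k hk => ⟨hx'x hk.1, hk.2⟩))
      · exact Or.inr (h1.subset (fun k hk => ⟨hx'x hk.1, hk.2⟩))
    rcases hcases with h | h
    · refine ⟨x ∩ y, Set.inter_subset_left.trans hxz, h, fun y' hy' => ?_⟩
      rcases List.mem_cons.1 hy' with rfl | hy'
      · refine Or.inr (Set.Finite.subset finite_empty ?_)
        rintro k ⟨⟨_, hk2⟩, hk3⟩
        exact absurd hk2 hk3
      · exact step (x ∩ y) Set.inter_subset_left h y' hy'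
    · refine ⟨x \ y, Set.diff_subset.trans hxz, h, fun y' hy' => ?_⟩
      rcases List.mem_cons.1 hy' with rfl | hy'
      · refine Or.inl (Set.Finite.subset finite_empty ?_)
        rintro k ⟨⟨_, hk2⟩, hk3⟩
        exact absurd hk3 hk2
      · exact step (x \ y) Set.diff_subset h y' hy'

/-- every infinite set is split by some set (namely its "even part"). -/
lemma exists_split (x : Set ℕ) (hx : x.Infinite) :
    ∃ y : Set ℕ, (x ∩ y).Infinite ∧ (x \ y).Infinite := by
  set p : ℕ → Prop := (· ∈ x) with hp
  have hpx : {k | p k}.Infinite := hx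
  have hmono := Nat.nth_strictMono hpx
  refine ⟨Nat.nth p '' {k | Even k}, ?_, ?_⟩
  · apply Set.Infinite.mono (s := Nat.nth p '' {k | Even k})
    · rintro _ ⟨k, _, rfl⟩
      exact ⟨Nat.nth_mem_of_infinite hpx k, ⟨k, ‹Even k›, rfl⟩⟩
    · exact Set.Infinite.image (fun a _ b _ h => hmono.injective h)
        (Set.infinite_of_injective_forall_mem (f := fun k : ℕ => 2 * k)
          (fun a b h => by dsimp at h; omega) (fun a => ⟨a, two_mul a⟩))
  · apply Set.Infinite.mono (s := Nat.nth p '' {k | Odd k})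
    · rintro _ ⟨k, hk, rfl⟩
      refine ⟨Nat.nth_mem_of_infinite hpx k, ?_⟩
      rintro ⟨k', hk', heq⟩
      have := hmono.injective heq
      rw [this] at hk'
      exact (Nat.not_even_iff_odd.2 hk) hk'
    · exact Set.Infinite.image (fun a _ b _ h => hmono.injective h)
        (Set.infinite_of_injective_forall_mem (f := fun k : ℕ => 2 * k + 1)
          (fun a b h => by dsimp at h; omega) (fun a => ⟨a, rfl⟩))

lemma sNum_set_nonempty : {c : Cardinal | ∃ S : Set (Set ℕ), #S = c ∧
    ∀ x : Set ℕ, x.Infinite → ∃ y ∈ S, (x ∩ y).Infinite ∧ (x \ y).Infinite}.Nonempty := by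
  refine ⟨#(Set.univ : Set (Set ℕ)), Set.univ, rfl, fun x hx => ?_⟩
  obtain ⟨y, h1, h2⟩ := exists_split x hx
  exact ⟨y, Set.mem_univ y, h1, h2⟩

lemma aleph0_le_sNum : ℵ₀ ≤ sNum := by
  by_contra hlt
  push_neg at hlt
  have hmem := csInf_mem sNum_set_nonempty
  obtain ⟨S, hScard, hSsplit⟩ := hmem
  rw [show sInf {c : Cardinal | ∃ S : Set (Set ℕ), #S = c ∧
    ∀ x : Set ℕ, x.Infinite → ∃ y ∈ S, (x ∩ y).Infinite ∧ (x \ y).Infinite} = sNum from rfl]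
    at hScard
  have hSfin : S.Finite := by
    rw [← Cardinal.lt_aleph0_iff_set_finite]
    rw [hScard]; exact hlt
  obtain ⟨x, _, hxinf, hxun⟩ := unsplit_list hSfin.toFinset.toList Set.univ Set.infinite_univ
  obtain ⟨y, hyS, hy1, hy2⟩ := hSsplit x hxinf
  have : y ∈ hSfin.toFinset.toList := by
    rw [Finset.mem_toList, Set.Finite.mem_toFinset]
    exact hyS
  rcases hxun y this with h | h
  · exact hy1 h
  · exact hy2 h

/-- relativized non-splitting: inside any infinite `z`, a small family fails to split. -/
lemma unsplit_in (z : Set ℕ) (hz : z.Infinite) (F : Set (Set ℕ)) (hF : #F < sNum) :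
    ∃ x ⊆ z, x.Infinite ∧ ∀ y ∈ F, (x ∩ y).Finite ∨ (x \ y).Finite := by
  set p : ℕ → Prop := (· ∈ z) with hp
  have hpz : {k | p k}.Infinite := hz
  set h : ℕ → ℕ := Nat.nth p with hh
  have hmono := Nat.nth_strictMono hpz
  set F' : Set (Set ℕ) := (fun y => h ⁻¹' y) '' F with hF'
  have hF'card : #F' < sNum := lt_of_le_of_lt Cardinal.mk_image_le hF
  have : ∃ w : Set ℕ, w.Infinite ∧ ∀ y' ∈ F', ¬((w ∩ y').Infinite ∧ (w \ y').Infinite) := by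
    by_contra hc
    push_neg at hc
    have : #F' ∈ {c : Cardinal | ∃ S : Set (Set ℕ), #S = c ∧
        ∀ x : Set ℕ, x.Infinite → ∃ y ∈ S, (x ∩ y).Infinite ∧ (x \ y).Infinite} := by
      refine ⟨F', rfl, fun x hx => ?_⟩
      obtain ⟨y', hy', h1, h2⟩ := hc x hx
      exact ⟨y', hy', h1, h2⟩
    exact absurd (csInf_le' this) (not_le.2 hF'card)
  obtain ⟨w, hwinf, hwun⟩ := this
  refine ⟨h '' w, ?_, ?_, ?_⟩
  · rintro _ ⟨k, _, rfl⟩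
    exact Nat.nth_mem_of_infinite hpz k
  · exact hwinf.image (fun a _ b _ hab => hmono.injective hab)
  · intro y hy
    have key1 : h '' w ∩ y = h '' (w ∩ h ⁻¹' y) := by
      ext k
      constructor
      · rintro ⟨⟨a, ha, rfl⟩, hk2⟩
        exact ⟨a, ⟨ha, hk2⟩, rfl⟩
      · rintro ⟨a, ⟨ha1, ha2⟩, rfl⟩
        exact ⟨⟨a, ha1, rfl⟩, ha2⟩
    have key2 : h '' w \ y = h '' (w \ h ⁻¹' y) := by
      ext k
      constructor
      · rintro ⟨⟨a, ha, rfl⟩, hk2⟩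
        exact ⟨a, ⟨ha, hk2⟩, rfl⟩
      · rintro ⟨a, ⟨ha1, ha2⟩, rfl⟩
        exact ⟨⟨a, ha1, rfl⟩, ha2⟩
    have := hwun (h ⁻¹' y) (Set.mem_image_of_mem _ hy)
    rw [not_and_or, Set.not_infinite, Set.not_infinite] at this
    rcases this with h1 | h1
    · exact Or.inl (key1 ▸ h1.image h)
    · exact Or.inr (key2 ▸ h1.image h)

lemma main_lemma (S : Set (Set (Set ℕ))) (hS : ∀ G ∈ S, GroupwiseDense G)
    (h1 : #S < gNum') (h2 : #S < sNum) :
    ∃ x : Set ℕ, x.Infinite ∧ ∀ G ∈ S, x ∈ G := by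
  classical
  -- the generated ideals form a small family of non-meager ideals
  set T : Set (Set (Set ℕ)) := IdealGen '' S with hT
  have hTcard : #T ≤ #S := Cardinal.mk_image_le
  have hTprops : ∀ X ∈ T, X ⊆ InfSets ∧ DownClosed X ∧
      (∀ x ∈ X, ∀ y ∈ X, x ∪ y ∈ X) ∧ ¬ MeagerSet X := by
    rintro _ ⟨G, hG, rfl⟩
    exact ⟨idealGen_sub G, idealGen_down G, idealGen_union G,
      gwd_not_meager (idealGen_gwd (hS G hG))⟩
  have hTne : InfSets ∩ ⋂₀ T ≠ ∅ := by
    intro hemp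
    have : gNum' ≤ #T := csInf_le' ⟨T, hTprops, rfl, hemp⟩
    exact absurd (lt_of_le_of_lt (this.trans hTcard) h1) (lt_irrefl _)
  obtain ⟨z, hzinf, hzT⟩ : ∃ z : Set ℕ, z.Infinite ∧ ∀ X ∈ T, z ∈ X := by
    obtain ⟨z, hz⟩ := Set.nonempty_iff_ne_empty.2 hTne
    exact ⟨z, hz.1, fun X hX => hz.2 X hX⟩
  -- choose finite witnesses
  have hwit : ∀ G : S, ∃ t : Finset (Set ℕ), ↑t ⊆ (G : Set (Set ℕ)) ∧ (z \ ⋃₀ ↑t).Finite := by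
    rintro ⟨G, hG⟩
    obtain ⟨_, t, htG, hzt⟩ := hzT (IdealGen G) ⟨G, hG, rfl⟩
    exact ⟨t, htG, hzt⟩
  choose t ht1 ht2 using hwit
  set F : Set (Set ℕ) := ⋃ G : S, (t G : Set (Set ℕ)) with hF
  have hFcard : #F < sNum := by
    rcases lt_or_ge (#S) ℵ₀ with hfin | hinf
    · have hSfin : S.Finite := Cardinal.lt_aleph0_iff_set_finite.1 hfin
      have : F.Finite := by
        haveI : Finite S := hSfin
        exact Set.finite_iUnion (fun G => (t G).finite_toSet)
      exact lt_of_lt_of_le this.lt_aleph0 aleph0_le_sNum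
    · have hne : Nonempty S := by
        rw [← Cardinal.mk_ne_zero_iff]
        intro h0
        rw [h0] at hinf
        exact Cardinal.aleph0_ne_zero (le_antisymm (h0 ▸ hinf) zero_le)
      have hbound : #F ≤ #S * ℵ₀ := by
        refine le_trans (Cardinal.mk_iUnion_le _) ?_
        apply mul_le_mul' (le_refl _)
        exact ciSup_le' fun G => le_of_lt (t G).finite_toSet.lt_aleph0
      have : #S * ℵ₀ = #S := by
        rw [Cardinal.mul_eq_max hinf (le_refl _)]
        exact max_eq_left hinf
      rw [this] at hbound
      exact lt_of_le_of_lt hbound h2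
  obtain ⟨x, hxz, hxinf, hxun⟩ := unsplit_in z hzinf F hFcard
  refine ⟨x, hxinf, ?_⟩
  intro G hG
  by_contra hxG
  -- then x ∩ y is finite for every y in the witness set of G
  have hfinInt : ∀ y ∈ t ⟨G, hG⟩, (x ∩ y).Finite := by
    intro y hy
    have hyG : y ∈ G := ht1 ⟨G, hG⟩ hy
    rcases hxun y (Set.mem_iUnion.2 ⟨⟨G, hG⟩, hy⟩) with h | h
    · exact h
    · exact absurd ((hS G hG).2.1 y hyG x hxinf h) hxG
  have hxfin : x.Finite := by
    have hsub : x ⊆ (z \ ⋃₀ ↑(t ⟨G, hG⟩)) ∪ ⋃ y ∈ t ⟨G, hG⟩, (x ∩ y) := by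
      intro k hk
      by_cases hku : k ∈ ⋃₀ (↑(t ⟨G, hG⟩) : Set (Set ℕ))
      · obtain ⟨y, hy, hky⟩ := hku
        exact Or.inr (Set.mem_biUnion hy ⟨hk, hky⟩)
      · exact Or.inl ⟨hxz hk, hku⟩
    exact Set.Finite.subset ((ht2 ⟨G, hG⟩).union
      ((t ⟨G, hG⟩).finite_toSet.biUnion (fun y hy => hfinInt y hy))) hsub
  exact hxinf hxfin

lemma interval_cover (P : IntervalPartition) (k : ℕ) : ∃ n, k ∈ P.I n := by
  set n := Nat.findGreatest (fun n => P.e n ≤ k) k with hn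
  have h0 : (fun n => P.e n ≤ k) 0 := by
    simp only [P.zero]
    exact Nat.zero_le k
  refine ⟨n, Nat.findGreatest_spec (P := fun n => P.e n ≤ k) (Nat.zero_le k) h0, ?_⟩
  by_contra hle
  push_neg at hle
  have h1 : n + 1 ≤ k := le_trans (P.mono.le_apply) hle
  have h2 := Nat.le_findGreatest (P := fun m => P.e m ≤ k) h1 hle
  rw [← hn] at h2
  omega

lemma interval_disjoint (P : IntervalPartition) {n m k : ℕ} (hn : k ∈ P.I n) (hm : k ∈ P.I m) :
    n = m := by
  by_contra hne
  rcases Nat.lt_or_ge n m with h | h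
  · have : k < P.e m := lt_of_lt_of_le hn.2 (P.mono.monotone h)
    exact absurd hm.1 (by omega)
  · have hgt : m < n := by omega
    have : k < P.e n := lt_of_lt_of_le hm.2 (P.mono.monotone hgt)
    exact absurd hn.1 (by omega)

def IUf (U : Ultrafilter ℕ) : Set (Set ℕ) := {x : Set ℕ | x.Infinite ∧ xᶜ ∈ U}

lemma iuf_props (U : Ultrafilter ℕ) (hU : (U : Filter ℕ) ≤ Filter.cofinite) :
    IUf U ⊆ InfSets ∧ DownClosed (IUf U) ∧
      (∀ x ∈ IUf U, ∀ y ∈ IUf U, x ∪ y ∈ IUf U) ∧ GroupwiseDense (IUf U) := by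
  have hdown : DownClosed (IUf U) := by
    rintro y ⟨hyinf, hycU⟩ x hxinf hxy
    refine ⟨hxinf, ?_⟩
    have h1 : (x \ y)ᶜ ∈ U := hU (Set.Finite.compl_mem_cofinite hxy)
    have : yᶜ ∩ (x \ y)ᶜ ⊆ xᶜ := by
      rintro k ⟨hk1, hk2⟩ hkx
      exact hk2 ⟨hkx, hk1⟩
    exact Filter.mem_of_superset (Filter.inter_mem hycU h1) this
  refine ⟨fun x hx => hx.1, hdown, ?_, ?_⟩
  · rintro x ⟨hxinf, hxc⟩ y ⟨hyinf, hyc⟩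
    refine ⟨hxinf.mono Set.subset_union_left, ?_⟩
    rw [Set.compl_union]
    exact Filter.inter_mem hxc hyc
  · refine ⟨fun x hx => hx.1, hdown, ?_⟩
    intro P
    set uev : Set ℕ := ⋃ n ∈ {n : ℕ | Even n}, P.I n with huev
    set uod : Set ℕ := ⋃ n ∈ {n : ℕ | Odd n}, P.I n with huod
    have hcompl : uodᶜ = uev := by
      ext k
      simp only [huev, huod, mem_compl_iff, mem_iUnion, exists_prop, mem_setOf_eq, not_exists,
        not_and]
      constructor
      · intro h
        obtain ⟨n, hn⟩ := interval_cover P k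
        rcases Nat.even_or_odd n with he | ho
        · exact ⟨n, he, hn⟩
        · exact absurd hn (h n ho)
      · rintro ⟨n, hne, hn⟩ m hmo hm
        rw [interval_disjoint P hn hm] at hne
        exact (Nat.not_even_iff_odd.2 hmo) hne
    have hinfint : ∀ A : Set ℕ, A.Infinite → (⋃ n ∈ A, P.I n).Infinite := by
      intro A hA
      apply Set.Infinite.mono (s := P.e '' A)
      · rintro _ ⟨n, hn, rfl⟩
        exact Set.mem_biUnion hn ⟨le_refl _, P.mono (Nat.lt_succ_self n)⟩
      · exact hA.image (fun a _ b _ hab => P.mono.injective hab)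
    have hodd_inf : ({n : ℕ | Odd n} : Set ℕ).Infinite :=
      Set.infinite_of_injective_forall_mem (f := fun k : ℕ => 2 * k + 1)
        (fun a b h => by dsimp at h; omega) (fun a => ⟨a, rfl⟩)
    have heven_inf : ({n : ℕ | Even n} : Set ℕ).Infinite :=
      Set.infinite_of_injective_forall_mem (f := fun k : ℕ => 2 * k)
        (fun a b h => by dsimp at h; omega) (fun a => ⟨a, two_mul a⟩)
    rcases Ultrafilter.mem_or_compl_mem U uod with h | h
    · -- complement of uev is uod ∈ U
      refine ⟨{n : ℕ | Even n}, heven_inf, hinfint _ heven_inf, ?_⟩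
      have : uevᶜ = uod := by
        rw [← hcompl, compl_compl]
      rw [this]
      exact h
    · exact ⟨{n : ℕ | Odd n}, hodd_inf, hinfint _ hodd_inf, hcompl ▸ h⟩

lemma witness_family : ∃ S : Set (Set (Set ℕ)),
    (∀ X ∈ S, X ⊆ InfSets ∧ DownClosed X ∧ (∀ x ∈ X, ∀ y ∈ X, x ∪ y ∈ X) ∧ ¬ MeagerSet X) ∧
    (∀ X ∈ S, GroupwiseDense X) ∧ InfSets ∩ ⋂₀ S = ∅ := by
  refine ⟨{X | ∃ U : Ultrafilter ℕ, (U : Filter ℕ) ≤ Filter.cofinite ∧ X = IUf U}, ?_, ?_, ?_⟩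
  · rintro _ ⟨U, hU, rfl⟩
    obtain ⟨hsub, hdown, hunion, hgwd⟩ := iuf_props U hU
    exact ⟨hsub, hdown, hunion, gwd_not_meager hgwd⟩
  · rintro _ ⟨U, hU, rfl⟩
    exact (iuf_props U hU).2.2.2
  · rw [Set.eq_empty_iff_forall_notMem]
    rintro y ⟨hyinf, hyall⟩
    have hinf : y ∈ InfSets := hyinf
    -- find an ultrafilter containing y and all cofinite sets
    have hne : Filter.NeBot (Filter.cofinite ⊓ Filter.principal y) := by
      rw [Filter.inf_principal_neBot_iff]
      intro s hs
      have : (y \ sᶜ).Infinite := Set.Infinite.diff hinf hs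
      obtain ⟨k, hk⟩ := this.nonempty
      exact ⟨k, by simpa using hk.2, hk.1⟩
    obtain ⟨U, hUle⟩ := Ultrafilter.exists_le (Filter.cofinite ⊓ Filter.principal y)
    have hUcof : (U : Filter ℕ) ≤ Filter.cofinite := le_trans hUle inf_le_left
    have hyU : y ∈ U := Filter.le_principal_iff.1 (le_trans hUle inf_le_right)
    have hymem := hyall (IUf U) ⟨U, hUcof, rfl⟩
    have : y ∩ yᶜ ∈ U := Filter.inter_mem hyU hymem.2
    rw [Set.inter_compl_self] at this
    exact (Ultrafilter.neBot U).ne (Filter.empty_mem_iff_bot.1 this)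


end Aux

/-- Theorem 7: min(𝔤′, 𝔰) ≤ 𝔤 ≤ 𝔤′; in particular fewer than min(𝔤′, 𝔰) groupwise
dense sets have a common member. -/
theorem stmt18 :
    min gNum' sNum ≤ gNum ∧ gNum ≤ gNum' ∧
    ∀ (ι : Type) (G : ι → Set (Set ℕ)), #ι < min gNum' sNum →
      (∀ i, GroupwiseDense (G i)) → ∃ x : Set ℕ, x.Infinite ∧ ∀ i, x ∈ G i := by
  obtain ⟨W, hWprops, hWgwd, hWempty⟩ := witness_family
  have hg'ne : {c : Cardinal | ∃ S : Set (Set (Set ℕ)),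
      (∀ X ∈ S, X ⊆ InfSets ∧ DownClosed X ∧ (∀ x ∈ X, ∀ y ∈ X, x ∪ y ∈ X) ∧ ¬ MeagerSet X) ∧
      #S = c ∧ InfSets ∩ ⋂₀ S = ∅}.Nonempty := ⟨#W, W, hWprops, rfl, hWempty⟩
  have hgne : {c : Cardinal | ∃ S : Set (Set (Set ℕ)), (∀ G ∈ S, GroupwiseDense G) ∧
      #S = c ∧ InfSets ∩ ⋂₀ S = ∅}.Nonempty := ⟨#W, W, hWgwd, rfl, hWempty⟩
  have hmin : min gNum' sNum ≤ gNum := by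
    refine le_csInf hgne ?_
    rintro c ⟨S, hS, rfl, hempty⟩
    by_contra hlt
    rw [not_le] at hlt
    obtain ⟨h1, h2⟩ := lt_min_iff.1 hlt
    obtain ⟨x, hxinf, hxall⟩ := main_lemma S hS h1 h2
    rw [Set.eq_empty_iff_forall_notMem] at hempty
    exact hempty x ⟨hxinf, fun X hX => hxall X hX⟩
  refine ⟨hmin, ?_, ?_⟩
  · refine le_csInf hg'ne ?_
    rintro c ⟨S, hS, hcard, hempty⟩
    exact csInf_le' ⟨S, fun G hG =>
      nonmeager_gwd (hS G hG).1 (hS G hG).2.1 (hS G hG).2.2.2, hcard, hempty⟩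
  · intro ι G hlt hGgwd
    obtain ⟨h1, h2⟩ := lt_min_iff.1 hlt
    have hcard : #(Set.range G) ≤ #ι := Cardinal.mk_range_le
    obtain ⟨x, hxinf, hxall⟩ := main_lemma (Set.range G)
      (by rintro _ ⟨i, rfl⟩; exact hGgwd i)
      (lt_of_le_of_lt hcard h1) (lt_of_le_of_lt hcard h2)
    exact ⟨x, hxinf, fun i => hxall (G i) ⟨i, rfl⟩⟩
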